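/- Let E₁,…,E_{m−1} be l × l real matrices with Eᵢᵀ = −Eᵢ, Eᵢ² = −I, and Eᵢ·Eⱼ = −Eⱼ·Eᵢ for i ≠ j; let α, β > 0 with α² + β² = 1; and let (u,v) ∈ V₂^{α,β}. Then the curve ε(t) = (cos t·u + (α/β)·sin t·v, −(β/α)·sin t·u + cos t·v) satisfies ε(t) ∈ V₂^{α,β} for all t ∈ ℝ and ε(0) = (u,v); moreover, the curve t ↦ ξ(ε(t)), where ξ(u,v) = (−(β/α)·u, (α/β)·v), has derivative at t = 0 equal to η(u,v) = (−v, −u). -/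

import Mathlib

open scoped RealInnerProductSpace

/-- The action of an `l × l` real matrix on `EuclideanSpace ℝ (Fin l)`. -/
noncomputable def matAct {l : ℕ} (A : Matrix (Fin l) (Fin l) ℝ)
    (u : EuclideanSpace ℝ (Fin l)) : EuclideanSpace ℝ (Fin l) :=
  (WithLp.equiv 2 (Fin l → ℝ)).symm (A.mulVec (WithLp.equiv 2 (Fin l → ℝ) u))

/-- Pinkall–Thorbergsson's deformed Clifford–Stiefel manifold `V₂^{α,β}`. -/
noncomputable def cliffordV2ab (l m : ℕ) (E : Fin (m - 1) → Matrix (Fin l) (Fin l) ℝ)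
    (α β : ℝ) : Set (EuclideanSpace ℝ (Fin l) × EuclideanSpace ℝ (Fin l)) :=
  {p | ‖p.1‖ = α ∧ ‖p.2‖ = β ∧ ⟪p.1, p.2⟫ = 0 ∧
    ∀ i : Fin (m - 1), ⟪matAct (E i) p.1, p.2⟫ = 0}

/-- The unit normal field `ξ(u,v) = (−(β/α)·u, (α/β)·v)` on `V₂^{α,β}`. -/
noncomputable def xiField {l : ℕ} (α β : ℝ)
    (p : EuclideanSpace ℝ (Fin l) × EuclideanSpace ℝ (Fin l)) :
    EuclideanSpace ℝ (Fin l) × EuclideanSpace ℝ (Fin l) :=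
  ((-(β / α)) • p.1, (α / β) • p.2)

lemma matAct_add {l : ℕ} (A : Matrix (Fin l) (Fin l) ℝ) (x y : EuclideanSpace ℝ (Fin l)) :
    matAct A (x + y) = matAct A x + matAct A y := by
  simp [matAct, Matrix.mulVec_add]

lemma matAct_smul {l : ℕ} (A : Matrix (Fin l) (Fin l) ℝ) (c : ℝ) (x : EuclideanSpace ℝ (Fin l)) :
    matAct A (c • x) = c • matAct A x := by
  simp [matAct, Matrix.mulVec_smul]

lemma inner_matAct {l : ℕ} (A : Matrix (Fin l) (Fin l) ℝ) (x y : EuclideanSpace ℝ (Fin l)) :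
    ⟪matAct A x, y⟫ = ⟪x, matAct A.transpose y⟫ := by
  simp only [matAct, PiLp.inner_apply, RCLike.inner_apply, starRingEnd_apply, star_trivial,
    WithLp.equiv_symm_apply, WithLp.equiv_apply, WithLp.ofLp_toLp, Matrix.mulVec, dotProduct,
    Matrix.transpose_apply, Finset.sum_mul, Finset.mul_sum]
  rw [Finset.sum_comm]
  apply Finset.sum_congr rfl; intro i _; apply Finset.sum_congr rfl; intro j _; ring

lemma inner_matAct_skew {l : ℕ} {A : Matrix (Fin l) (Fin l) ℝ} (h : A.transpose = -A)
    (x y : EuclideanSpace ℝ (Fin l)) :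
    ⟪matAct A x, y⟫ = -⟪matAct A y, x⟫ := by
  rw [inner_matAct, h, real_inner_comm]
  have : matAct (-A) y = -matAct A y := by simp [matAct, Matrix.neg_mulVec]
  rw [this, inner_neg_left]

/-- Let `E₁,…,E_{m−1}` be a Clifford system, `α, β > 0` with `α² + β² = 1`, and
`(u,v) ∈ V₂^{α,β}`.  Then the curve
`ε(t) = (cos t·u + (α/β)·sin t·v, −(β/α)·sin t·u + cos t·v)` lies in `V₂^{α,β}`,
passes through `(u,v)` at `t = 0`, and the curve `t ↦ ξ(ε(t))` has derivative at
`t = 0` equal to `η(u,v) = (−v, −u)`. -/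
theorem principal_curvature_zero (l m : ℕ)
    (E : Fin (m - 1) → Matrix (Fin l) (Fin l) ℝ)
    (hskew : ∀ i, (E i).transpose = -(E i))
    (hsq : ∀ i, E i * E i = -1)
    (hanti : ∀ i j, i ≠ j → E i * E j = -(E j * E i))
    (α β : ℝ) (hα : 0 < α) (hβ : 0 < β) (hαβ : α ^ 2 + β ^ 2 = 1)
    (u v : EuclideanSpace ℝ (Fin l)) (huv : (u, v) ∈ cliffordV2ab l m E α β) :
    (∀ t : ℝ,
      (Real.cos t • u + ((α / β) * Real.sin t) • v,
        (-(β / α) * Real.sin t) • u + Real.cos t • v) ∈ cliffordV2ab l m E α β) ∧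
    ((Real.cos (0:ℝ)) • u + ((α / β) * Real.sin (0:ℝ)) • v,
      (-(β / α) * Real.sin (0:ℝ)) • u + (Real.cos (0:ℝ)) • v) = (u, v) ∧
    deriv (fun t : ℝ => xiField α β
        (Real.cos t • u + ((α / β) * Real.sin t) • v,
          (-(β / α) * Real.sin t) • u + Real.cos t • v)) 0 = (-v, -u) := by
  obtain ⟨hnu, hnv, hipuv, hE⟩ := huv
  have hα0 : α ≠ 0 := hα.ne'
  have hβ0 : β ≠ 0 := hβ.ne'
  -- inner products of basic vectors
  have huu : ⟪u, u⟫ = α ^ 2 := by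
    rw [real_inner_self_eq_norm_sq, hnu]
  have hvv : ⟪v, v⟫ = β ^ 2 := by
    rw [real_inner_self_eq_norm_sq, hnv]
  have huv' : ⟪u, v⟫ = 0 := hipuv
  have hvu : ⟪v, u⟫ = 0 := by rw [real_inner_comm]; exact huv'
  have hEuv : ∀ i, ⟪matAct (E i) u, v⟫ = 0 := hE
  -- inner products involving E i
  have hEuu : ∀ i, ⟪matAct (E i) u, u⟫ = 0 := fun i => by
    have h := inner_matAct_skew (hskew i) u u; linarith
  have hEvv : ∀ i, ⟪matAct (E i) v, v⟫ = 0 := fun i => by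
    have h := inner_matAct_skew (hskew i) v v; linarith
  have hEvu : ∀ i, ⟪matAct (E i) v, u⟫ = 0 := fun i => by
    rw [inner_matAct_skew (hskew i) v u, real_inner_comm] at *
    rw [real_inner_comm]
    simp [hE i]
  -- general inner product formula
  have key : ∀ a b c d : ℝ,
      ⟪a • u + b • v, c • u + d • v⟫ = a * c * α ^ 2 + b * d * β ^ 2 := by
    intro a b c d
    simp only [inner_add_left, inner_add_right, real_inner_smul_left, real_inner_smul_right,
      huu, hvv, hvu, huv']
    ring
  refine ⟨?_, by simp, ?_⟩
  · intro t
    have hs2 : Real.sin t ^ 2 + Real.cos t ^ 2 = 1 := Real.sin_sq_add_cos_sq t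
    refine ⟨?_, ?_, ?_, ?_⟩
    · have h : ‖Real.cos t • u + (α / β * Real.sin t) • v‖ ^ 2 = α ^ 2 := by
        rw [← real_inner_self_eq_norm_sq, key]
        field_simp
        linear_combination hs2
      rw [← Real.sqrt_sq (norm_nonneg _), h, Real.sqrt_sq hα.le]
    · have h : ‖(-(β / α) * Real.sin t) • u + Real.cos t • v‖ ^ 2 = β ^ 2 := by
        rw [← real_inner_self_eq_norm_sq, key]
        field_simp
        linear_combination hs2
      rw [← Real.sqrt_sq (norm_nonneg _), h, Real.sqrt_sq hβ.le]
    · rw [key]; field_simp; ring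
    · intro i
      rw [matAct_add, matAct_smul, matAct_smul]
      simp only [inner_add_left, inner_add_right, real_inner_smul_left, real_inner_smul_right,
        hEuu i, hEvv i, hEvu i, hEuv i]
      ring
  · -- derivative
    have h1 : HasDerivAt (fun t : ℝ => (-(β / α)) • (Real.cos t • u + (α / β * Real.sin t) • v))
        (-v) 0 := by
      have hc : HasDerivAt (fun t : ℝ => Real.cos t • u + (α / β * Real.sin t) • v)
          ((-Real.sin 0) • u + (α / β * Real.cos 0) • v) 0 :=
        (((Real.hasDerivAt_cos 0).smul_const u).add
          (((Real.hasDerivAt_sin 0).const_mul (α / β)).smul_const v))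
      have := hc.const_smul (-(β / α))
      refine this.congr_deriv ?_
      simp only [Real.sin_zero, Real.cos_zero, neg_zero, zero_smul, zero_add, add_zero, mul_one, smul_smul]
      rw [show -(β / α) * (α / β) = -1 by field_simp, neg_one_smul]
    have h2 : HasDerivAt (fun t : ℝ => (α / β) • ((-(β / α) * Real.sin t) • u + Real.cos t • v))
        (-u) 0 := by
      have hc : HasDerivAt (fun t : ℝ => (-(β / α) * Real.sin t) • u + Real.cos t • v)
          ((-(β / α) * Real.cos 0) • u + (-Real.sin 0) • v) 0 :=
        ((((Real.hasDerivAt_sin 0).const_mul (-(β / α))).smul_const u).add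
          ((Real.hasDerivAt_cos 0).smul_const v))
      have := hc.const_smul (α / β)
      refine this.congr_deriv ?_
      simp only [Real.sin_zero, Real.cos_zero, neg_zero, zero_smul, zero_add, add_zero, mul_one, smul_smul]
      rw [show α / β * -(β / α) = -1 by field_simp, neg_one_smul]
    have : HasDerivAt (fun t : ℝ => xiField α β
        (Real.cos t • u + ((α / β) * Real.sin t) • v,
          (-(β / α) * Real.sin t) • u + Real.cos t • v)) (-v, -u) 0 := h1.prodMk h2
    exact this.deriv
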